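/- The Euler-product identity ∑_{f monic} b(f) χ(f) u^{deg f} = ∏_{P: χ₂(P)=1} (1 - χ(P) u^{deg P})^{-1} · ∏_{Q: χ₂(Q)=-1} (1 - χ(Q²) u^{2 deg Q})^{-1} · (1 - χ(T)u)^{-1} holds as formal power series, where b is the indicator of monic polynomials representable as A² + T·B² over 𝔽_q (q odd), χ is any Dirichlet character, and χ₂ is the nontrivial quadratic character modulo T. -/

import Mathlib

open Polynomial

namespace EulerB

variable {Fq : Type*} [Field Fq]

/-- The map `T ↦ -X²`. -/
noncomputable def phi (f : Polynomial Fq) : Polynomial Fq := f.comp (-(X ^ 2))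

/-- The involution `X ↦ -X`. -/
noncomputable def sig (g : Polynomial Fq) : Polynomial Fq := g.comp (-X)

lemma phi_mul (f g : Polynomial Fq) : phi (f * g) = phi f * phi g := mul_comp ..
lemma phi_add (f g : Polynomial Fq) : phi (f + g) = phi f + phi g := add_comp
lemma phi_sub (f g : Polynomial Fq) : phi (f - g) = phi f - phi g := sub_comp ..
lemma phi_one : phi (1 : Polynomial Fq) = 1 := one_comp
lemma phi_zero : phi (0 : Polynomial Fq) = 0 := zero_comp
lemma phi_pow (f : Polynomial Fq) (k : ℕ) : phi (f ^ k) = phi f ^ k := pow_comp ..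
lemma phi_X : phi (X : Polynomial Fq) = -(X ^ 2) := X_comp
lemma phi_C (c : Fq) : phi (C c) = C c := C_comp

lemma sig_mul (f g : Polynomial Fq) : sig (f * g) = sig f * sig g := mul_comp ..
lemma sig_X : sig (X : Polynomial Fq) = -X := X_comp

lemma natDegree_negX2 : (-(X ^ 2) : Polynomial Fq).natDegree = 2 := by
  simp [natDegree_neg]

lemma natDegree_phi (f : Polynomial Fq) : (phi f).natDegree = 2 * f.natDegree := by
  rw [phi, natDegree_comp, natDegree_negX2, mul_comm]

lemma natDegree_sig (g : Polynomial Fq) : (sig g).natDegree = g.natDegree := by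
  rw [sig, natDegree_comp]; simp

lemma leadingCoeff_negX2 : (-(X ^ 2) : Polynomial Fq).leadingCoeff = -1 := by
  simp [leadingCoeff_neg]

lemma leadingCoeff_phi (f : Polynomial Fq) :
    (phi f).leadingCoeff = f.leadingCoeff * (-1) ^ f.natDegree := by
  rw [phi, leadingCoeff_comp (by rw [natDegree_negX2]; norm_num), leadingCoeff_negX2]

lemma leadingCoeff_sig (g : Polynomial Fq) :
    (sig g).leadingCoeff = g.leadingCoeff * (-1) ^ g.natDegree := by
  rw [sig, leadingCoeff_comp (by simp)]
  simp

lemma phi_ne_zero {f : Polynomial Fq} (hf : f ≠ 0) : phi f ≠ 0 := by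
  intro h
  apply hf
  have := leadingCoeff_phi f
  rw [h, leadingCoeff_zero] at this
  have hl : f.leadingCoeff = 0 := by
    rcases mul_eq_zero.mp this.symm with h1 | h1
    · exact h1
    · exact absurd h1 (pow_ne_zero _ (by norm_num))
  exact leadingCoeff_eq_zero.mp hl

lemma phi_injective : Function.Injective (phi (Fq := Fq)) := by
  intro a b h
  by_contra hne
  exact phi_ne_zero (sub_ne_zero.mpr hne) (by rw [phi_sub, h, sub_self])

lemma sig_phi (f : Polynomial Fq) : sig (phi f) = phi f := by
  rw [phi, sig, comp_assoc]
  congr 1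
  simp [neg_comp, pow_comp, X_comp]

lemma sig_sig (g : Polynomial Fq) : sig (sig g) = g := by
  rw [sig, sig, comp_assoc]
  simp [neg_comp, X_comp, comp_X]

/-- Even/odd decomposition. -/
lemma exists_decomp (g : Polynomial Fq) : ∃ A B : Polynomial Fq, g = phi A + X * phi B := by
  induction g using Polynomial.induction_on' with
  | add p q hp hq =>
    obtain ⟨A, B, rfl⟩ := hp
    obtain ⟨A', B', rfl⟩ := hq
    exact ⟨A + A', B + B', by rw [phi_add, phi_add]; ring⟩
  | monomial n a =>
    rcases Nat.even_or_odd n with ⟨m, hm⟩ | ⟨m, hm⟩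
    · refine ⟨C ((-1) ^ m * a) * X ^ m, 0, ?_⟩
      have hC : (C ((-1) ^ m * a) : Polynomial Fq) = (-1) ^ m * C a := by
        rw [C_mul, map_pow, map_neg, map_one]
      have hE : ((-1 : Polynomial Fq)) ^ m * (-1) ^ m = 1 := by
        rw [← pow_add]; exact Even.neg_one_pow ⟨m, rfl⟩
      have hF : ((-(X ^ 2) : Polynomial Fq)) ^ m = (-1) ^ m * X ^ (m * 2) := by
        rw [neg_pow, ← pow_mul, mul_comm 2 m]
      rw [phi_zero, phi_mul, phi_pow, phi_C, phi_X, hC, hm, ← C_mul_X_pow_eq_monomial]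
      linear_combination (-(C a * X ^ (m + m))) * hE + (-((-1 : Polynomial Fq) ^ m * C a)) * hF
    · refine ⟨0, C ((-1) ^ m * a) * X ^ m, ?_⟩
      have hC : (C ((-1) ^ m * a) : Polynomial Fq) = (-1) ^ m * C a := by
        rw [C_mul, map_pow, map_neg, map_one]
      have hE : ((-1 : Polynomial Fq)) ^ m * (-1) ^ m = 1 := by
        rw [← pow_add]; exact Even.neg_one_pow ⟨m, rfl⟩
      have hF : ((-(X ^ 2) : Polynomial Fq)) ^ m = (-1) ^ m * X ^ (m * 2) := by
        rw [neg_pow, ← pow_mul, mul_comm 2 m]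
      rw [phi_zero, phi_mul, phi_pow, phi_C, phi_X, hC, hm, ← C_mul_X_pow_eq_monomial]
      linear_combination (-(C a * X ^ (2 * m + 1))) * hE
        + (-((-1 : Polynomial Fq) ^ m * C a * X)) * hF

variable (h2 : (2 : Fq) ≠ 0)
include h2

lemma decomp_unique {A B : Polynomial Fq} (h : phi A + X * phi B = 0) : A = 0 ∧ B = 0 := by
  have hs : phi A - X * phi B = 0 := by
    have := congrArg sig h
    rwa [sig, add_comp, mul_comp, ← sig, ← sig, ← sig, sig_phi, sig_phi, sig_X,
      neg_mul, ← sub_eq_add_neg, sig, zero_comp] at this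
  have hA : phi A = 0 := by
    have h2' : (2 : Polynomial Fq) * phi A = 0 := by linear_combination h + hs
    rcases mul_eq_zero.mp h2' with h1 | h1
    · exact absurd h1 (by
        intro hc
        apply h2
        have : ((2 : Polynomial Fq)).coeff 0 = 0 := by rw [hc]; simp
        simpa using this)
    · exact h1
  have hB : X * phi B = 0 := by linear_combination h - hA
  constructor
  · by_contra hA0; exact phi_ne_zero hA0 hA
  · rcases mul_eq_zero.mp hB with h1 | h1
    · exact absurd h1 X_ne_zero
    · by_contra hB0; exact phi_ne_zero hB0 h1

lemma decomp_eq {A B A' B' : Polynomial Fq} (h : phi A + X * phi B = phi A' + X * phi B') :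
    A = A' ∧ B = B' := by
  have : phi (A - A') + X * phi (B - B') = 0 := by
    rw [phi_sub, phi_sub]; linear_combination h
  obtain ⟨h1, h2'⟩ := decomp_unique h2 this
  exact ⟨sub_eq_zero.mp h1, sub_eq_zero.mp h2'⟩

/-- `phi` reflects divisibility. -/
lemma phi_dvd_phi {a b : Polynomial Fq} (h : phi a ∣ phi b) : a ∣ b := by
  obtain ⟨g, hg⟩ := h
  obtain ⟨C', D', rfl⟩ := exists_decomp g
  rw [mul_add, ← mul_assoc, mul_comm (phi a) X, mul_assoc, ← phi_mul, ← phi_mul] at hg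
  have : phi b + X * phi 0 = phi (a * C') + X * phi (a * D') := by
    rw [phi_zero]; linear_combination hg
  obtain ⟨h1, -⟩ := decomp_eq h2 this
  exact ⟨C', h1⟩

/-- Representability by the norm form. -/
def IsRep (f : Polynomial Fq) : Prop := ∃ A B : Polynomial Fq, f = A ^ 2 + X * B ^ 2

omit h2

lemma norm_decomp (A B : Polynomial Fq) :
    (phi A + X * phi B) * sig (phi A + X * phi B) = phi (A ^ 2 + X * B ^ 2) := by
  have hs : sig (phi A + X * phi B) = phi A - X * phi B := by
    rw [sig, add_comp, mul_comp, ← sig, ← sig, ← sig, sig_phi, sig_phi, sig_X]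
    ring
  rw [hs, phi_add, phi_mul, phi_pow, phi_pow, phi_X]
  ring

include h2

lemma isRep_iff_norm {f : Polynomial Fq} : IsRep f ↔ ∃ g, phi f = g * sig g := by
  constructor
  · rintro ⟨A, B, rfl⟩
    exact ⟨phi A + X * phi B, (norm_decomp A B).symm⟩
  · rintro ⟨g, hg⟩
    obtain ⟨A, B, rfl⟩ := exists_decomp g
    rw [norm_decomp] at hg
    exact ⟨A, B, phi_injective hg⟩

omit h2

lemma isRep_one : IsRep (1 : Polynomial Fq) := ⟨1, 0, by ring⟩

lemma isRep_X : IsRep (X : Polynomial Fq) := ⟨0, 1, by ring⟩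

lemma isRep_mul {f g : Polynomial Fq} (hf : IsRep f) (hg : IsRep g) : IsRep (f * g) := by
  obtain ⟨A, B, rfl⟩ := hf
  obtain ⟨C', D', rfl⟩ := hg
  exact ⟨A * C' - X * B * D', A * D' + B * C', by ring⟩

lemma isRep_sq (f : Polynomial Fq) : IsRep (f ^ 2) := ⟨f, 0, by ring⟩

lemma isRep_pow {f : Polynomial Fq} (hf : IsRep f) (k : ℕ) : IsRep (f ^ k) := by
  induction k with
  | zero => simpa using isRep_one
  | succ n ih => rw [pow_succ]; exact isRep_mul ih hf

lemma isRep_eval_zero {f : Polynomial Fq} (hf : IsRep f) : IsSquare (f.eval 0) := by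
  obtain ⟨A, B, rfl⟩ := hf
  refine ⟨A.eval 0, ?_⟩
  simp [eval_add, eval_mul, eval_pow]
  ring

end EulerB

namespace PartB

variable {Fq : Type*} [Field Fq]

open EulerB

lemma sig_zero : sig (0 : Polynomial Fq) = 0 := zero_comp

lemma sig_ne_zero {g : Polynomial Fq} (hg : g ≠ 0) : sig g ≠ 0 := by
  intro h
  apply hg
  have := congrArg sig h
  rwa [sig_sig, sig_zero] at this

lemma sig_pow (g : Polynomial Fq) (k : ℕ) : sig (g ^ k) = sig g ^ k := pow_comp ..

lemma one_le_natDegree_of_nonunit {g : Polynomial Fq} (hg0 : g ≠ 0) (hg : ¬IsUnit g) :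
    1 ≤ g.natDegree := by
  by_contra h
  push_neg at h
  have h0 : g.natDegree = 0 := by omega
  have hC := Polynomial.eq_C_of_natDegree_eq_zero h0
  apply hg
  rw [hC]
  refine (Polynomial.isUnit_C).mpr (isUnit_iff_ne_zero.mpr ?_)
  intro hc
  apply hg0
  rw [hC, hc, map_zero]

lemma irreducible_natDegree_pos {P : Polynomial Fq} (hPi : Irreducible P) :
    1 ≤ P.natDegree :=
  one_le_natDegree_of_nonunit hPi.ne_zero hPi.not_isUnit

lemma exists_norm (g : Polynomial Fq) : ∃ N, IsRep N ∧ g * sig g = phi N := by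
  obtain ⟨A, B, rfl⟩ := exists_decomp g
  exact ⟨A ^ 2 + X * B ^ 2, ⟨A, B, rfl⟩, norm_decomp A B⟩

lemma natDegree_norm {g N : Polynomial Fq} (hg : g ≠ 0) (h : g * sig g = phi N) :
    N.natDegree = g.natDegree := by
  have h1 : (phi N).natDegree = 2 * N.natDegree := natDegree_phi N
  rw [← h, natDegree_mul hg (sig_ne_zero hg), natDegree_sig] at h1
  omega

lemma leadingCoeff_norm {g N : Polynomial Fq} (hg : g ≠ 0) (h : g * sig g = phi N) :
    N.leadingCoeff = g.leadingCoeff ^ 2 := by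
  have h1 := leadingCoeff_phi N
  rw [← h, leadingCoeff_mul, leadingCoeff_sig, natDegree_norm hg h] at h1
  have hsq : ((-1 : Fq) ^ g.natDegree) * ((-1) ^ g.natDegree) = 1 := by
    rw [← pow_add]; exact Even.neg_one_pow ⟨_, rfl⟩
  linear_combination (-(-1 : Fq) ^ g.natDegree) * h1
    - (N.leadingCoeff - g.leadingCoeff ^ 2) * hsq

/-- If `phi P` factors nontrivially, then `P` is representable. -/
lemma isRep_of_factor (h2 : (2 : Fq) ≠ 0) {P g h : Polynomial Fq} (hP : P.Monic)
    (hPi : Irreducible P) (hfac : phi P = g * h) (hgu : ¬IsUnit g) (hhu : ¬IsUnit h) :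
    IsRep P := by
  have hP0 : P ≠ 0 := hP.ne_zero
  have hphi : phi P ≠ 0 := phi_ne_zero hP0
  have hg0 : g ≠ 0 := by rintro rfl; rw [zero_mul] at hfac; exact hphi hfac
  have hh0 : h ≠ 0 := by rintro rfl; rw [mul_zero] at hfac; exact hphi hfac
  obtain ⟨N, hNrep, hN⟩ := exists_norm g
  obtain ⟨M, hMrep, hM⟩ := exists_norm h
  have hprod : N * M = P ^ 2 := by
    apply phi_injective
    rw [phi_mul, ← hN, ← hM, phi_pow]
    calc g * sig g * (h * sig h) = (g * h) * (sig g * sig h) := by ring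
      _ = (g * h) * sig (g * h) := by rw [sig_mul]
      _ = phi P * phi P := by rw [← hfac, sig_phi]
      _ = phi P ^ 2 := by ring
  have hdegN : N.natDegree = g.natDegree := natDegree_norm hg0 hN
  have hdegg : g.natDegree + h.natDegree = 2 * P.natDegree := by
    have h1 := natDegree_phi P
    rw [hfac, natDegree_mul hg0 hh0] at h1
    omega
  have hg1 : 1 ≤ g.natDegree := one_le_natDegree_of_nonunit hg0 hgu
  have hh1 : 1 ≤ h.natDegree := one_le_natDegree_of_nonunit hh0 hhu
  have hN0 : N ≠ 0 := by
    intro h0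
    rw [h0, natDegree_zero] at hdegN
    omega
  obtain ⟨i, hi2, hassoc⟩ := (dvd_prime_pow hPi.prime 2).mp ⟨M, hprod.symm⟩
  have hdeg_assoc : N.natDegree = i * P.natDegree := by
    obtain ⟨u, hu⟩ := hassoc
    have hu0 : (u : Polynomial Fq) ≠ 0 := u.isUnit.ne_zero
    have := congrArg natDegree hu
    rwa [natDegree_mul hN0 hu0, natDegree_eq_zero_of_isUnit u.isUnit, add_zero,
      natDegree_pow] at this
  have hi1 : i = 1 := by
    interval_cases i
    · omega
    · rfl
    · omega
  rw [hi1, pow_one] at hassoc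
  obtain ⟨u, hu⟩ := hassoc.symm
  obtain ⟨c, hc_unit, hcu⟩ := Polynomial.isUnit_iff.mp u.isUnit
  have hNC : N = P * C c := by rw [← hu, hcu]
  have hlcN : N.leadingCoeff = c := by
    rw [hNC, leadingCoeff_mul, hP.leadingCoeff, one_mul, leadingCoeff_C]
  have hc_eq : c = g.leadingCoeff ^ 2 := by
    rw [← hlcN]; exact leadingCoeff_norm hg0 hN
  obtain ⟨A, B, hAB⟩ := hNrep
  set s := g.leadingCoeff with hs_def
  have hs : s ≠ 0 := leadingCoeff_ne_zero.mpr hg0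
  refine ⟨C s⁻¹ * A, C s⁻¹ * B, ?_⟩
  have key : A ^ 2 + X * B ^ 2 = P * C (s ^ 2) := by rw [← hAB, hNC, hc_eq]
  have hss : (s⁻¹) ^ 2 * s ^ 2 = 1 := by
    rw [← mul_pow, inv_mul_cancel₀ hs, one_pow]
  calc P = (C (s⁻¹ ^ 2) * C (s ^ 2)) * P := by
        rw [← C_mul, hss, map_one, one_mul]
    _ = C (s⁻¹ ^ 2) * (P * C (s ^ 2)) := by ring
    _ = C (s⁻¹ ^ 2) * (A ^ 2 + X * B ^ 2) := by rw [key]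
    _ = (C s⁻¹ * A) ^ 2 + X * (C s⁻¹ * B) ^ 2 := by
        rw [map_pow]; ring

lemma eq_X_of_irreducible_eval_zero {P : Polynomial Fq} (hP : P.Monic) (hPi : Irreducible P)
    (h0 : P.eval 0 = 0) : P = X := by
  have hdvd : X ∣ P := Polynomial.X_dvd_iff.mpr (by rw [Polynomial.coeff_zero_eq_eval_zero, h0])
  have hassoc : Associated X P := Polynomial.irreducible_X.associated_of_dvd hPi hdvd
  exact (Polynomial.eq_of_monic_of_associated monic_X hP hassoc).symm

lemma char_odd [Fintype Fq] (hq : Odd (Fintype.card Fq)) :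
    (ringChar Fq).Prime ∧ ringChar Fq ≠ 2 ∧ (2 : Fq) ≠ 0 := by
  have hp : (ringChar Fq).Prime := CharP.char_is_prime Fq (ringChar Fq)
  obtain ⟨n, -, hcard⟩ := FiniteField.card Fq (ringChar Fq)
  have hne2 : ringChar Fq ≠ 2 := by
    intro h
    rw [h] at hcard
    have heven : Even (Fintype.card Fq) := by
      rw [hcard]
      exact (Nat.even_pow).mpr ⟨even_two, n.pos.ne'⟩
    exact (Nat.not_even_iff_odd.mpr hq) heven
  refine ⟨hp, hne2, ?_⟩
  intro h20
  have hdvd := (CharP.cast_eq_zero_iff Fq (ringChar Fq) 2).mp h20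
  exact hne2 ((Nat.prime_dvd_prime_iff_eq hp Nat.prime_two).mp hdvd)

section Split

variable [Fintype Fq]

/-- In the field `Fq[T]/(P)`, the image of `P.eval 0` is `(-t)^(1+q+...+q^(d-1))`. -/
lemma isRep_of_isSquare (hq : Odd (Fintype.card Fq)) {P : Polynomial Fq} (hP : P.Monic)
    (hPi : Irreducible P) (hsq : IsSquare (P.eval 0)) : IsRep P := by
  obtain ⟨hp, hp2, h2⟩ := char_odd hq
  by_cases h0 : P.eval 0 = 0
  · rw [eq_X_of_irreducible_eval_zero hP hPi h0]; exact isRep_X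
  obtain ⟨a, ha⟩ := hsq
  have ha0 : a ≠ 0 := by rintro rfl; rw [mul_zero] at ha; exact h0 ha
  have hP0 : P ≠ 0 := hP.ne_zero
  set d := P.natDegree with hd_def
  have hd : 1 ≤ d := irreducible_natDegree_pos hPi
  set q := Fintype.card Fq with hq_def
  have hq2 : 2 ≤ q := Fintype.one_lt_card
  -- the field K = Fq[T]/(P)
  haveI : Fact (Irreducible P) := ⟨hPi⟩
  letI K := AdjoinRoot P
  letI : Fintype K := Module.fintypeOfFintype (AdjoinRoot.powerBasis hP0).basis
  have hcardK : Fintype.card K = q ^ d := by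
    rw [Module.card_fintype (AdjoinRoot.powerBasis hP0).basis, Fintype.card_fin,
      AdjoinRoot.powerBasis_dim]
  haveI : CharP K (ringChar Fq) :=
    charP_of_injective_ringHom (algebraMap Fq K).injective (ringChar Fq)
  haveI : ExpChar K (ringChar Fq) := ExpChar.prime hp
  obtain ⟨n, -, hcard⟩ := FiniteField.card Fq (ringChar Fq)
  set F : K →+* K := iterateFrobenius K (ringChar Fq) (n : ℕ) with hF_def
  have hF : ∀ x : K, F x = x ^ q := by
    intro x
    rw [hF_def, iterateFrobenius_def, hq_def, hcard]
  have hFa : ∀ (x : K) (g : Polynomial Fq),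
      (Polynomial.aeval x g) ^ q = Polynomial.aeval (x ^ q) g := by
    intro x g
    have hcomp : F.comp (algebraMap Fq K) = algebraMap Fq K := by
      ext c
      rw [RingHom.comp_apply, hF, ← map_pow, hq_def, FiniteField.pow_card]
    rw [← hF, Polynomial.aeval_def, Polynomial.aeval_def, Polynomial.hom_eval₂, hcomp, hF]
  have hFam : ∀ (m : ℕ) (x : K) (g : Polynomial Fq),
      (Polynomial.aeval x g) ^ q ^ m = Polynomial.aeval (x ^ q ^ m) g := by
    intro m
    induction m with
    | zero => intro x g; simp
    | succ m ih =>
      intro x g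
      rw [pow_succ, pow_mul, ih x g, hFa, ← pow_mul, ← pow_succ]
  set t : K := AdjoinRoot.root P with ht_def
  have haevalt : Polynomial.aeval t P = 0 := by
    rw [ht_def, AdjoinRoot.aeval_eq, AdjoinRoot.mk_self]
  have hroot : ∀ i : ℕ, Polynomial.aeval (t ^ q ^ i) P = 0 := by
    intro i
    rw [← hFam, haevalt, zero_pow (by positivity)]
  have hqd : ∀ x : K, x ^ q ^ d = x := by
    intro x
    rw [← hcardK]
    exact FiniteField.pow_card x
  -- distinctness of the conjugates
  have hdist : ∀ i < d, ∀ j < d, t ^ q ^ i = t ^ q ^ j → i = j := by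
    have key : ∀ i j, i < j → j < d → t ^ q ^ i = t ^ q ^ j → False := by
      intro i j hij hjd hEq
      set m := i + (d - j) with hm_def
      have hm1 : 1 ≤ m := by omega
      have hmd : m < d := by omega
      have htm : t ^ q ^ m = t := by
        have h1 := congrArg (fun z : K => z ^ q ^ (d - j)) hEq
        simp only [← pow_mul, ← pow_add] at h1
        have h2 : j + (d - j) = d := by omega
        rw [h2, hqd] at h1
        rwa [hm_def]
      have hall : ∀ x : K, x ^ q ^ m = x := by
        intro x
        obtain ⟨g, rfl⟩ := AdjoinRoot.mk_surjective (g := P) x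
        rw [← AdjoinRoot.aeval_eq, ← ht_def, hFam, htm]
      set W : Polynomial K := X ^ q ^ m - X with hW_def
      have hqm1 : 1 < q ^ m := by
        calc 1 < q := hq2
        _ = q ^ 1 := (pow_one q).symm
        _ ≤ q ^ m := Nat.pow_le_pow_right (by omega) hm1
      have hW0 : W ≠ 0 := by
        intro hW
        have hc : W.coeff (q ^ m) = 1 := by
          rw [hW_def, Polynomial.coeff_sub, Polynomial.coeff_X_pow, if_pos rfl,
            Polynomial.coeff_X, if_neg (by omega), sub_zero]
        rw [hW, Polynomial.coeff_zero] at hc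
        exact one_ne_zero hc.symm
      have hdegW : W.natDegree ≤ q ^ m := by
        refine le_trans (Polynomial.natDegree_sub_le _ _) ?_
        simp only [Polynomial.natDegree_X_pow, Polynomial.natDegree_X]
        omega
      have hroots : ∀ x : K, x ∈ W.roots := by
        intro x
        rw [Polynomial.mem_roots hW0]
        simp [hW_def, Polynomial.IsRoot, hall x]
      have hcard_le : Fintype.card K ≤ q ^ m := by
        calc Fintype.card K = Finset.univ.card := (Finset.card_univ (α := K)).symm
          _ ≤ W.roots.toFinset.card :=
              Finset.card_le_card (fun x _ => Multiset.mem_toFinset.mpr (hroots x))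
          _ ≤ Multiset.card W.roots := Multiset.toFinset_card_le _
          _ ≤ W.natDegree := Polynomial.card_roots' W
          _ ≤ q ^ m := hdegW
      have : q ^ m < q ^ d := Nat.pow_lt_pow_right (by omega) hmd
      omega
    intro i hi j hj hEq
    rcases lt_trichotomy i j with h | h | h
    · exact absurd (key i j h hj hEq) not_false
    · exact h
    · exact absurd (key j i h hi hEq.symm) not_false
  -- the product of conjugates
  set M : Multiset K := (Multiset.range d).map (fun i => t ^ q ^ i) with hM_def
  have hMnodup : M.Nodup :=
    Multiset.Nodup.map_on
      (fun i hi j hj h => hdist i (Multiset.mem_range.mp hi) j (Multiset.mem_range.mp hj) h)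
      (Multiset.nodup_range d)
  set Pm : Polynomial K := P.map (algebraMap Fq K) with hPm_def
  have hPm0 : Pm ≠ 0 := by
    rw [hPm_def, Ne, Polynomial.map_eq_zero]
    exact hP0
  have hMsub : M ≤ Pm.roots := by
    rw [Multiset.le_iff_subset hMnodup]
    intro x hx
    obtain ⟨i, hi, rfl⟩ := Multiset.mem_map.mp hx
    rw [Polynomial.mem_roots hPm0]
    rw [hPm_def, Polynomial.IsRoot, Polynomial.eval_map, ← Polynomial.aeval_def]
    exact hroot i
  set Q : Polynomial K := (M.map (fun a => X - C a)).prod with hQ_def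
  have hQdvd : Q ∣ Pm :=
    dvd_trans (Multiset.prod_dvd_prod_of_le (Multiset.map_le_map hMsub))
      (Polynomial.prod_multiset_X_sub_C_dvd Pm)
  have hQmonic : Q.Monic :=
    Polynomial.monic_multiset_prod_of_monic _ _ (fun a _ => Polynomial.monic_X_sub_C a)
  have hQdeg : Q.natDegree = d := by
    rw [hQ_def, Polynomial.natDegree_multiset_prod _ (by
      intro hx
      obtain ⟨b, -, hb⟩ := Multiset.mem_map.mp hx
      exact Polynomial.X_sub_C_ne_zero b hb)]
    rw [Multiset.map_map]
    simp [Function.comp_def, Polynomial.natDegree_X_sub_C, hM_def, Multiset.map_map]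
  have hPmmonic : Pm.Monic := hP.map (algebraMap Fq K)
  have hPmdeg : Pm.natDegree = d := hP.natDegree_map _
  have hQP : Q = Pm := by
    obtain ⟨c, hc⟩ := hQdvd
    have hc0 : c ≠ 0 := by rintro rfl; rw [mul_zero] at hc; exact hPm0 hc
    have hQ0 : Q ≠ 0 := hQmonic.ne_zero
    have hcd : c.natDegree = 0 := by
      have h1 := congrArg Polynomial.natDegree hc
      rw [Polynomial.natDegree_mul hQ0 hc0, hPmdeg, hQdeg] at h1
      omega
    have hcmonic : c.Monic := hQmonic.of_mul_monic_left (hc ▸ hPmmonic)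
    rw [hc, hcmonic.natDegree_eq_zero.mp hcd, mul_one]
  -- evaluation at zero
  have heval2 : (algebraMap Fq K) (P.eval 0) = (-t) ^ (∑ i ∈ Finset.range d, q ^ i) := by
    have h1 : (algebraMap Fq K) (P.eval 0) = Q.eval 0 := by
      rw [hQP, hPm_def, Polynomial.eval_zero_map]
    rw [h1, hQ_def, Polynomial.eval_multiset_prod, Multiset.map_map]
    have h3 : ∀ i : ℕ, (0 : K) - t ^ q ^ i = (-t) ^ q ^ i := by
      intro i
      rw [zero_sub, Odd.neg_pow (hq.pow)]
    calc (Multiset.map ((fun p : Polynomial K => Polynomial.eval 0 p) ∘ fun a => X - C a) M).prod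
        = (Multiset.map (fun a : K => 0 - a) M).prod := by
          congr 1
          apply Multiset.map_congr rfl
          intro x hx
          simp [Function.comp_def]
      _ = ((Multiset.range d).map (fun i => (-t) ^ q ^ i)).prod := by
          rw [hM_def, Multiset.map_map]
          congr 1
          apply Multiset.map_congr rfl
          intro i hi
          simp only [Function.comp_def]
          exact h3 i
      _ = ∏ i ∈ Finset.range d, (-t) ^ q ^ i := by
          rw [Finset.prod_eq_multiset_prod]
          rfl
      _ = (-t) ^ (∑ i ∈ Finset.range d, q ^ i) := Finset.prod_pow_eq_pow_sum _ _ _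
  -- `-t` is a square in K
  set S : ℕ := ∑ i ∈ Finset.range d, q ^ i with hS_def
  have hgeom : (q - 1) * S = q ^ d - 1 := by
    have h1 : (∑ i ∈ Finset.range d, (q : ℤ) ^ i) * ((q : ℤ) - 1) = (q : ℤ) ^ d - 1 :=
      geom_sum_mul (q : ℤ) d
    have hq1 : 1 ≤ q := by omega
    have hqd1 : 1 ≤ q ^ d := Nat.one_le_pow _ _ (by omega)
    have h2' : (((q - 1) * S : ℕ) : ℤ) = (((q ^ d - 1 : ℕ)) : ℤ) := by
      push_cast [hq1, hqd1, hS_def]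
      linear_combination h1
    exact_mod_cast h2'
  have hKodd : Odd (Fintype.card K) := by rw [hcardK]; exact hq.pow
  obtain ⟨k, hk⟩ := hq
  have h2S : 2 * (((q - 1) / 2) * S) = q ^ d - 1 := by
    have hk2 : (q - 1) / 2 = k := by omega
    rw [hk2, ← mul_assoc, show 2 * k = q - 1 by omega, hgeom]
  have hcardK2 : Fintype.card K / 2 = ((q - 1) / 2) * S := by
    obtain ⟨j, hj⟩ := hKodd
    have hqdj : q ^ d = 2 * j + 1 := by omega
    omega
  have hchar2 : ringChar K ≠ 2 := by rw [ringChar.eq K (ringChar Fq)]; exact hp2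
  have ht0 : t ≠ 0 := by
    intro ht
    have h1 : Polynomial.aeval (0 : K) P = 0 := ht ▸ haevalt
    rw [Polynomial.aeval_def, Polynomial.eval₂_at_zero, Polynomial.coeff_zero_eq_eval_zero] at h1
    exact h0 ((algebraMap Fq K).injective (by rw [h1, map_zero]))
  have hpow1 : (-t) ^ (Fintype.card K / 2) = 1 := by
    rw [hcardK2, mul_comm ((q - 1) / 2) S, pow_mul, ← heval2, ← map_pow]
    have haq : (P.eval 0) ^ ((q - 1) / 2) = 1 := by
      have h21 : 2 * ((q - 1) / 2) = q - 1 := by omega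
      rw [ha, ← pow_two, ← pow_mul, h21, hq_def]
      exact FiniteField.pow_card_sub_one_eq_one a ha0
    rw [haq, map_one]
  have hsqt : IsSquare (-t) :=
    (FiniteField.isSquare_iff hchar2 (neg_ne_zero.mpr ht0)).mpr hpow1
  obtain ⟨sK, hs⟩ := hsqt
  obtain ⟨S₀, hS₀⟩ := AdjoinRoot.mk_surjective (g := P) sK
  have hdvd : P ∣ S₀ * S₀ + X := by
    rw [← AdjoinRoot.mk_eq_zero, map_add, map_mul, AdjoinRoot.mk_X, hS₀, ← ht_def, ← hs]
    ring
  by_cases hirr : Irreducible (phi P)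
  · exfalso
    set R := S₀ %ₘ P with hR_def
    have hdvdR : P ∣ R * R + X := by
      have hsub : P ∣ (R * R + X) - (S₀ * S₀ + X) := by
        have hfactor : (R * R + X) - (S₀ * S₀ + X) = (R - S₀) * (R + S₀) := by ring
        rw [hfactor]
        apply Dvd.dvd.mul_right
        rw [hR_def, Polynomial.modByMonic_eq_sub_mul_div _ P]
        exact ⟨-(S₀ /ₘ P), by ring⟩
      have hfin := dvd_add hsub hdvd
      have heq : (R * R + X) - (S₀ * S₀ + X) + (S₀ * S₀ + X) = R * R + X := by ring
      rwa [heq] at hfin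
    have hdegR : R.natDegree < d := by
      by_cases hR0 : R = 0
      · rw [hR0, natDegree_zero]; omega
      · exact Polynomial.natDegree_lt_natDegree hR0 (Polynomial.degree_modByMonic_lt _ hP)
    have hfac2 : phi (R * R + X) = (phi R - X) * (phi R + X) := by
      rw [phi_add, phi_mul, phi_X]; ring
    have hdvdphi : phi P ∣ (phi R - X) * (phi R + X) := by
      obtain ⟨w, hw⟩ := hdvdR
      exact ⟨phi w, by rw [← hfac2, hw, phi_mul]⟩
    have hprime : Prime (phi P) := hirr.prime
    have hmone : phi ((-1 : Polynomial Fq)) = -1 := by rw [phi, neg_comp, one_comp]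
    have hne1 : phi R - X ≠ 0 := by
      intro hzero
      have hz : phi R + X * phi (-1) = 0 := by rw [hmone]; linear_combination hzero
      obtain ⟨-, hB⟩ := decomp_unique h2 hz
      exact absurd hB (by norm_num)
    have hne2 : phi R + X ≠ 0 := by
      intro hzero
      have hz : phi R + X * phi 1 = 0 := by rw [phi_one]; linear_combination hzero
      obtain ⟨-, hB⟩ := decomp_unique h2 hz
      exact one_ne_zero hB
    have hdeg1 : (phi R - X).natDegree ≤ 2 * d - 1 := by
      refine le_trans (Polynomial.natDegree_sub_le _ _) ?_
      rw [natDegree_phi, Polynomial.natDegree_X]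
      exact sup_le (by omega) (by omega)
    have hdeg2 : (phi R + X).natDegree ≤ 2 * d - 1 := by
      refine le_trans (Polynomial.natDegree_add_le _ _) ?_
      rw [natDegree_phi, Polynomial.natDegree_X]
      exact sup_le (by omega) (by omega)
    rcases hprime.2.2 _ _ hdvdphi with hdl | hdl
    · have hled := Polynomial.natDegree_le_of_dvd hdl hne1
      rw [natDegree_phi] at hled
      omega
    · have hled := Polynomial.natDegree_le_of_dvd hdl hne2
      rw [natDegree_phi] at hled
      omega
  · rw [irreducible_iff] at hirr
    push_neg at hirr
    have hnu : ¬IsUnit (phi P) := by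
      intro hu
      have hdeg0 := Polynomial.natDegree_eq_zero_of_isUnit hu
      rw [natDegree_phi] at hdeg0
      omega
    obtain ⟨g, h, hfacgh, hgu, hhu⟩ := hirr hnu
    exact isRep_of_factor h2 hP hPi hfacgh hgu hhu

end Split

lemma irreducible_phi (h2 : (2 : Fq) ≠ 0) {P : Polynomial Fq} (hP : P.Monic)
    (hPi : Irreducible P) (hns : ¬IsSquare (P.eval 0)) : Irreducible (phi P) := by
  by_contra hirr
  rw [irreducible_iff] at hirr
  push_neg at hirr
  have hd : 1 ≤ P.natDegree := irreducible_natDegree_pos hPi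
  have hnu : ¬IsUnit (phi P) := by
    intro hu
    have hdeg0 := Polynomial.natDegree_eq_zero_of_isUnit hu
    rw [natDegree_phi] at hdeg0
    omega
  obtain ⟨g, h, hfacgh, hgu, hhu⟩ := hirr hnu
  exact hns (isRep_eval_zero (isRep_of_factor h2 hP hPi hfacgh hgu hhu))

lemma dvd_sig_iff {w : Polynomial Fq} (a : Polynomial Fq) :
    a ∣ sig w ↔ sig a ∣ w := by
  constructor
  · rintro ⟨c, hc⟩
    refine ⟨sig c, ?_⟩
    have := congrArg sig hc
    rwa [sig_sig, sig_mul] at this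
  · rintro ⟨c, hc⟩
    refine ⟨sig c, ?_⟩
    rw [hc, sig_mul, sig_sig]

lemma count_even [DecidableEq Fq] (h2 : (2 : Fq) ≠ 0) {P f : Polynomial Fq} (hP : P.Monic)
    (hPi : Irreducible P) (hns : ¬IsSquare (P.eval 0)) (hf0 : f ≠ 0) (hrep : IsRep f) :
    Even (Multiset.count P (UniqueFactorizationMonoid.normalizedFactors f)) := by
  have hpi : Irreducible (phi P) := irreducible_phi h2 hP hPi hns
  obtain ⟨g, hg⟩ := (isRep_iff_norm h2).mp hrep
  have hphif : phi f ≠ 0 := phi_ne_zero hf0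
  have hg0 : g ≠ 0 := by rintro rfl; rw [zero_mul] at hg; exact hphif hg
  have hsigphi : ∀ k : ℕ, sig (phi P ^ k) = phi P ^ k := by
    intro k; rw [sig_pow, sig_phi]
  have hdvd_iff : ∀ k : ℕ, (phi P) ^ k ∣ g ↔ (phi P) ^ k ∣ sig g := by
    intro k
    rw [dvd_sig_iff (phi P ^ k), hsigphi k]
  have he1 : emultiplicity (phi P) g = emultiplicity (phi P) (sig g) :=
    le_antisymm (emultiplicity_le_emultiplicity_iff.mpr fun n h => (hdvd_iff n).mp h)
      (emultiplicity_le_emultiplicity_iff.mpr fun n h => (hdvd_iff n).mpr h)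
  have he2 : emultiplicity P f = emultiplicity (phi P) (phi f) := by
    refine le_antisymm (emultiplicity_le_emultiplicity_iff.mpr fun n h => ?_)
      (emultiplicity_le_emultiplicity_iff.mpr fun n h => ?_)
    · obtain ⟨c, hc⟩ := h
      exact ⟨phi c, by rw [hc, phi_mul, phi_pow]⟩
    · apply phi_dvd_phi h2
      rwa [phi_pow]
  have he3 : emultiplicity (phi P) (phi f)
      = emultiplicity (phi P) g + emultiplicity (phi P) (sig g) := by
    rw [hg]
    exact emultiplicity_mul hpi.prime
  have hcount := UniqueFactorizationMonoid.emultiplicity_eq_count_normalizedFactors hPi hf0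
  rw [hP.normalize_eq_self] at hcount
  have hsum : ((Multiset.count P (UniqueFactorizationMonoid.normalizedFactors f) : ℕ∞))
      = emultiplicity (phi P) g + emultiplicity (phi P) g := by
    rw [← hcount, he2, he3, he1]
  have hfin : emultiplicity (phi P) g ≠ ⊤ := by
    intro htop
    rw [htop, top_add] at hsum
    exact (ENat.coe_ne_top _) hsum
  lift emultiplicity (phi P) g to ℕ using hfin with e he
  refine ⟨e, ?_⟩
  have hcast : ((Multiset.count P (UniqueFactorizationMonoid.normalizedFactors f) : ℕ∞))
      = ((e + e : ℕ) : ℕ∞) := by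
    rw [hsum]
    push_cast
    rfl
  exact_mod_cast hcast

section Aux

lemma coeff_inv_geom (c : ℂ) {D : ℕ} (hD : 0 < D) (k : ℕ) :
    PowerSeries.coeff (R := ℂ) k ((1 - PowerSeries.C (R := ℂ) c * PowerSeries.X ^ D)⁻¹)
      = if D ∣ k then c ^ (k / D) else 0 := by
  set G : PowerSeries ℂ := PowerSeries.mk fun j => if D ∣ j then c ^ (j / D) else 0 with hG
  have hconst : PowerSeries.constantCoeff (R := ℂ) (1 - PowerSeries.C (R := ℂ) c * PowerSeries.X ^ D) ≠ 0 := by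
    rw [map_sub, map_one, map_mul, map_pow, PowerSeries.constantCoeff_X,
      zero_pow hD.ne', mul_zero, sub_zero]
    exact one_ne_zero
  have key : G * (1 - PowerSeries.C (R := ℂ) c * PowerSeries.X ^ D) = 1 := by
    ext m
    rw [mul_sub, mul_one, map_sub, ← mul_assoc, PowerSeries.coeff_mul_X_pow']
    rw [hG, PowerSeries.coeff_mk]
    by_cases hm : m = 0
    · subst hm
      rw [if_pos (dvd_zero D), if_neg (show ¬ D ≤ 0 by omega)]
      simp
    · rw [PowerSeries.coeff_one, if_neg hm]
      by_cases hdm : D ≤ m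
      · rw [if_pos hdm, PowerSeries.coeff_mul_C, PowerSeries.coeff_mk]
        by_cases hdvd : D ∣ m
        · have hdvd' : D ∣ m - D := (Nat.dvd_sub hdvd dvd_rfl)
          rw [if_pos hdvd, if_pos hdvd']
          obtain ⟨w, hw⟩ := hdvd
          rcases w with _ | w'
          · rw [mul_zero] at hw; exact absurd hw hm
          · have hw2 : m = D * w' + D := by rw [hw]; ring
            have h1 : m - D = D * w' := by omega
            have h2 : (m - D) / D = w' := by rw [h1, Nat.mul_div_cancel_left _ hD]
            have h3 : m / D = w' + 1 := by rw [hw, Nat.mul_div_cancel_left _ hD]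
            rw [h2, h3, pow_succ, sub_self]
        · have hdvd' : ¬ D ∣ m - D := by
            intro hc
            exact hdvd (by
              have := Nat.dvd_add hc (dvd_refl D)
              rwa [Nat.sub_add_cancel hdm] at this)
          rw [if_neg hdvd, if_neg hdvd', zero_mul, sub_zero]
      · rw [if_neg hdm, sub_zero]
        rw [if_neg (by intro hc; exact hdm (Nat.le_of_dvd (by omega) hc))]
  have hinv : G = (1 - PowerSeries.C (R := ℂ) c * PowerSeries.X ^ D)⁻¹ :=
    (PowerSeries.eq_inv_iff_mul_eq_one hconst).mpr key
  rw [← hinv, hG, PowerSeries.coeff_mk]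

lemma finite_degree_le (Fq : Type*) [Field Fq] [Fintype Fq] (n : ℕ) :
    {f : Polynomial Fq | f.natDegree ≤ n}.Finite := by
  have himg : ((fun f : Polynomial Fq => fun i : Fin (n + 1) => f.coeff i) ''
      {f : Polynomial Fq | f.natDegree ≤ n}).Finite := Set.toFinite _
  refine Set.Finite.of_finite_image himg ?_
  intro f hf g hg hfg
  ext k
  by_cases hk : k ≤ n
  · exact congrFun hfg ⟨k, by omega⟩
  · rw [Polynomial.coeff_eq_zero_of_natDegree_lt (lt_of_le_of_lt hf (by omega)),
      Polynomial.coeff_eq_zero_of_natDegree_lt (lt_of_le_of_lt hg (by omega))]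

end Aux

section Fact

open UniqueFactorizationMonoid

variable {Fq : Type*} [Field Fq] [DecidableEq Fq]

lemma monic_of_normalized_factor {f P : Polynomial Fq}
    (hP : P ∈ normalizedFactors f) : P.Monic := by
  have h1 : normalize P = P := normalize_normalized_factor P hP
  have h2 : P ≠ 0 := (irreducible_of_normalized_factor P hP).ne_zero
  rw [← h1]
  exact Polynomial.monic_normalize h2

lemma prod_normalizedFactors_monic {f : Polynomial Fq} (hf : f.Monic) :
    (normalizedFactors f).prod = f := by
  have h0 : f ≠ 0 := hf.ne_zero
  have hassoc := prod_normalizedFactors h0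
  refine Polynomial.eq_of_monic_of_associated ?_ hf hassoc
  have : (normalizedFactors f).prod = (Multiset.map id (normalizedFactors f)).prod := by
    rw [Multiset.map_id]
  rw [this]
  exact Polynomial.monic_multiset_prod_of_monic _ _
    (fun P hP => monic_of_normalized_factor hP)

lemma natDegree_eq_sum_count {f : Polynomial Fq} (hf : f.Monic) :
    f.natDegree = ∑ P ∈ (normalizedFactors f).toFinset,
      Multiset.count P (normalizedFactors f) * P.natDegree := by
  conv_lhs => rw [← prod_normalizedFactors_monic hf]
  rw [Polynomial.natDegree_multiset_prod _
    (fun h0 => (irreducible_of_normalized_factor 0 h0).ne_zero rfl)]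
  rw [Finset.sum_multiset_map_count]
  rfl

lemma normalizedFactors_finset_prod_pow {s : Finset (Polynomial Fq)}
    (hs : ∀ P ∈ s, P.Monic ∧ Irreducible P) (e : Polynomial Fq → ℕ) :
    normalizedFactors (∏ P ∈ s, P ^ e P) = ∑ P ∈ s, (e P) • ({P} : Multiset (Polynomial Fq)) := by
  classical
  induction s using Finset.induction with
  | empty => simp [UniqueFactorizationMonoid.normalizedFactors_one]
  | insert _ _ hnotmem _ =>
    rename_i a s' ih
    have ha := hs a (Finset.mem_insert_self a s')
    have hs' : ∀ P ∈ s', P.Monic ∧ Irreducible P :=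
      fun P hP => hs P (Finset.mem_insert_of_mem hP)
    have hx : (a : Polynomial Fq) ^ e a ≠ 0 := pow_ne_zero _ ha.1.ne_zero
    have hy : (∏ P ∈ s', P ^ e P) ≠ 0 :=
      Finset.prod_ne_zero_iff.mpr (fun P hP => pow_ne_zero _ (hs' P hP).1.ne_zero)
    rw [Finset.prod_insert hnotmem, normalizedFactors_mul hx hy, normalizedFactors_pow,
      normalizedFactors_irreducible ha.2, ih hs', Finset.sum_insert hnotmem,
      ha.1.normalize_eq_self]

lemma count_sum_nsmul_singleton {s : Finset (Polynomial Fq)} (P : Polynomial Fq)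
    (e : Polynomial Fq → ℕ) :
    Multiset.count P (∑ Q ∈ s, (e Q) • ({Q} : Multiset (Polynomial Fq)))
      = if P ∈ s then e P else 0 := by
  rw [Multiset.count_sum']
  rw [Finset.sum_congr rfl (fun Q _ => ?_)]
  · rw [Finset.sum_ite_eq' s P e]
  · rw [Multiset.count_nsmul, Multiset.count_singleton]
    by_cases h : P = Q
    · subst h; simp
    · rw [if_neg h, if_neg (fun hc => h hc.symm), mul_zero]

end Fact

end PartB

open Classical in
/-- The indicator `b` of monic polynomials representable as `A² + T·B²` over `𝔽_q`. -/
noncomputable def bInd {Fq : Type*} [Field Fq] (f : Polynomial Fq) : ℂ :=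
  if ∃ A B : Polynomial Fq, f = A ^ 2 + Polynomial.X * B ^ 2 then 1 else 0

open EulerB PartB UniqueFactorizationMonoid

/-- The Euler-product identity
`Σ_{f monic} b(f) χ(f) u^{deg f}
  = ∏_{χ₂(P)=1} (1-χ(P)u^{deg P})⁻¹ · ∏_{χ₂(Q)=-1} (1-χ(Q²)u^{2 deg Q})⁻¹ · (1-χ(T)u)⁻¹`
as formal power series (stated coefficient-wise; Euler factors of degree `> n` do not affect
the coefficient of `u^n`). Here `χ` is any Dirichlet character modulo `Q₀` and `χ₂(P) = ±1`
according as `P(0)` is a nonzero square or a nonsquare. -/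
theorem euler_product_b
    (Fq : Type*) [Field Fq] [Fintype Fq] (hq : Odd (Fintype.card Fq))
    (Q₀ : Polynomial Fq) (hQ₀ : Q₀ ≠ 0) (χ : Polynomial Fq → ℂ)
    (hmul : ∀ f g : Polynomial Fq, χ (f * g) = χ f * χ g)
    (hne : ∀ f : Polynomial Fq, χ f ≠ 0 ↔ IsCoprime f Q₀)
    (hper : ∀ f g : Polynomial Fq, Q₀ ∣ (f - g) → χ f = χ g) :
    ∀ n : ℕ,
      (∑ᶠ (f : Polynomial Fq) (_ : f.Monic ∧ f.natDegree = n), bInd f * χ f)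
        = PowerSeries.coeff (R := ℂ) n
          ((∏ᶠ (P : Polynomial Fq) (_ : P.Monic ∧ Irreducible P ∧ P.natDegree ≤ n ∧
                P.eval 0 ≠ 0 ∧ ∃ a : Fq, a ^ 2 = P.eval 0),
              ((1 : PowerSeries ℂ) - PowerSeries.C (R := ℂ) (χ P) * PowerSeries.X ^ P.natDegree)⁻¹)
            * (∏ᶠ (P : Polynomial Fq) (_ : P.Monic ∧ Irreducible P ∧ P.natDegree ≤ n ∧
                P.eval 0 ≠ 0 ∧ ¬ ∃ a : Fq, a ^ 2 = P.eval 0),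
              ((1 : PowerSeries ℂ) - PowerSeries.C (R := ℂ) (χ (P ^ 2))
                  * PowerSeries.X ^ (2 * P.natDegree))⁻¹)
            * ((1 : PowerSeries ℂ) - PowerSeries.C (R := ℂ) (χ Polynomial.X) * PowerSeries.X)⁻¹) := by
  classical
  intro n
  -- multiplicative character facts
  have hχ1 : χ 1 = 1 := by
    have h1 : χ 1 ≠ 0 := (hne 1).mpr (isCoprime_one_left)
    have h2 := hmul 1 1
    rw [one_mul] at h2
    have h3 : χ 1 * 1 = χ 1 * χ 1 := by rw [mul_one, ← h2]
    exact (mul_left_cancel₀ h1 h3).symm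
  have hχpow : ∀ (f : Polynomial Fq) (k : ℕ), χ (f ^ k) = χ f ^ k := by
    intro f k
    induction k with
    | zero => simpa using hχ1
    | succ k ih => rw [pow_succ, pow_succ, hmul, ih]
  have hχprod : ∀ (s : Finset (Polynomial Fq)) (g : Polynomial Fq → Polynomial Fq),
      χ (∏ P ∈ s, g P) = ∏ P ∈ s, χ (g P) := by
    intro s g
    induction s using Finset.induction with
    | empty => simpa using hχ1
    | insert _ _ hmem _ =>
      rename_i a s' ih
      rw [Finset.prod_insert hmem, Finset.prod_insert hmem, hmul, ih]
  have h2 : (2 : Fq) ≠ 0 := (char_odd hq).2.2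
  -- index sets
  set Master : Finset (Polynomial Fq) := (finite_degree_le Fq n).toFinset with hMaster
  have hmemMaster : ∀ f : Polynomial Fq, f ∈ Master ↔ f.natDegree ≤ n := by
    intro f
    rw [hMaster, Set.Finite.mem_toFinset]
    exact Iff.rfl
  set Pn : Finset (Polynomial Fq) :=
    Master.filter (fun P => P.Monic ∧ Irreducible P ∧ P.natDegree ≤ n) with hPn
  set P' : Finset (Polynomial Fq) := insert Polynomial.X Pn with hP'
  have hmemP' : ∀ P : Polynomial Fq,
      P ∈ P' ↔ (P = Polynomial.X ∨ (P.Monic ∧ Irreducible P ∧ P.natDegree ≤ n)) := by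
    intro P
    rw [hP', Finset.mem_insert, hPn, Finset.mem_filter, hmemMaster]
    constructor
    · rintro (h | ⟨h1, h2'⟩)
      · exact Or.inl h
      · exact Or.inr h2'
    · rintro (h | h)
      · exact Or.inl h
      · exact Or.inr ⟨h.2.2, h⟩
  have hP'monic : ∀ P ∈ P', P.Monic ∧ Irreducible P := by
    intro P hP
    rcases (hmemP' P).mp hP with rfl | h
    · exact ⟨Polynomial.monic_X, Polynomial.irreducible_X⟩
    · exact ⟨h.1, h.2.1⟩
  have hP'deg : ∀ P ∈ P', 1 ≤ P.natDegree :=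
    fun P hP => irreducible_natDegree_pos (hP'monic P hP).2
  -- Euler factor data
  set mm : Polynomial Fq → ℕ := fun P => if IsSquare (P.eval 0) then 1 else 2 with hmm
  set DD : Polynomial Fq → ℕ := fun P => mm P * P.natDegree with hDD
  set E : Polynomial Fq → PowerSeries ℂ :=
    fun P => (1 - PowerSeries.C (R := ℂ) (χ (P ^ mm P)) * PowerSeries.X ^ DD P)⁻¹ with hE
  have hmm1 : ∀ P, 1 ≤ mm P := by
    intro P
    rw [hmm]
    dsimp only
    split_ifs <;> omega
  have hDDpos : ∀ P ∈ P', 0 < DD P := by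
    intro P hP
    rw [hDD]
    have := hP'deg P hP
    have := hmm1 P
    dsimp only
    exact Nat.mul_pos (by omega) (by omega)
  -- RHS: convert finprods to finset products
  set S1 : Finset (Polynomial Fq) := Master.filter (fun P => P.Monic ∧ Irreducible P ∧
    P.natDegree ≤ n ∧ P.eval 0 ≠ 0 ∧ ∃ a : Fq, a ^ 2 = P.eval 0) with hS1
  set S2 : Finset (Polynomial Fq) := Master.filter (fun P => P.Monic ∧ Irreducible P ∧
    P.natDegree ≤ n ∧ P.eval 0 ≠ 0 ∧ ¬ ∃ a : Fq, a ^ 2 = P.eval 0) with hS2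
  have hmemS1 : ∀ P : Polynomial Fq, P ∈ S1 ↔ (P.Monic ∧ Irreducible P ∧
      P.natDegree ≤ n ∧ P.eval 0 ≠ 0 ∧ ∃ a : Fq, a ^ 2 = P.eval 0) := by
    intro P
    rw [hS1, Finset.mem_filter, hmemMaster]
    constructor
    · rintro ⟨-, h⟩; exact h
    · intro h; exact ⟨h.2.2.1, h⟩
  have hmemS2 : ∀ P : Polynomial Fq, P ∈ S2 ↔ (P.Monic ∧ Irreducible P ∧
      P.natDegree ≤ n ∧ P.eval 0 ≠ 0 ∧ ¬ ∃ a : Fq, a ^ 2 = P.eval 0) := by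
    intro P
    rw [hS2, Finset.mem_filter, hmemMaster]
    constructor
    · rintro ⟨-, h⟩; exact h
    · intro h; exact ⟨h.2.2.1, h⟩
  have hfin1 : (∏ᶠ (P : Polynomial Fq) (_ : P.Monic ∧ Irreducible P ∧ P.natDegree ≤ n ∧
        P.eval 0 ≠ 0 ∧ ∃ a : Fq, a ^ 2 = P.eval 0),
        ((1 : PowerSeries ℂ) - PowerSeries.C (R := ℂ) (χ P) * PowerSeries.X ^ P.natDegree)⁻¹)
      = ∏ P ∈ S1,
        ((1 : PowerSeries ℂ) - PowerSeries.C (R := ℂ) (χ P) * PowerSeries.X ^ P.natDegree)⁻¹ :=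
    finprod_cond_eq_prod_of_cond_iff _ (fun {P} _ => (hmemS1 P).symm)
  have hfin2 : (∏ᶠ (P : Polynomial Fq) (_ : P.Monic ∧ Irreducible P ∧ P.natDegree ≤ n ∧
        P.eval 0 ≠ 0 ∧ ¬ ∃ a : Fq, a ^ 2 = P.eval 0),
        ((1 : PowerSeries ℂ) - PowerSeries.C (R := ℂ) (χ (P ^ 2))
          * PowerSeries.X ^ (2 * P.natDegree))⁻¹)
      = ∏ P ∈ S2, ((1 : PowerSeries ℂ) - PowerSeries.C (R := ℂ) (χ (P ^ 2))
          * PowerSeries.X ^ (2 * P.natDegree))⁻¹ :=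
    finprod_cond_eq_prod_of_cond_iff _ (fun {P} _ => (hmemS2 P).symm)
  -- the factors agree with `E` on each part
  have hS1E : ∀ P ∈ S1,
      ((1 : PowerSeries ℂ) - PowerSeries.C (R := ℂ) (χ P) * PowerSeries.X ^ P.natDegree)⁻¹ = E P := by
    intro P hP
    obtain ⟨-, -, -, -, a, ha⟩ := (hmemS1 P).mp hP
    have hsq : IsSquare (P.eval 0) := ⟨a, by rw [← ha]; ring⟩
    have hmP : mm P = 1 := by rw [hmm]; exact if_pos hsq
    rw [hE]
    dsimp only
    rw [hmP, hDD]
    dsimp only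
    rw [hmP, pow_one, one_mul]
  have hS2E : ∀ P ∈ S2,
      ((1 : PowerSeries ℂ) - PowerSeries.C (R := ℂ) (χ (P ^ 2))
        * PowerSeries.X ^ (2 * P.natDegree))⁻¹ = E P := by
    intro P hP
    obtain ⟨-, -, -, -, hnsq⟩ := (hmemS2 P).mp hP
    have hsq : ¬ IsSquare (P.eval 0) := by
      rintro ⟨r, hr⟩
      exact hnsq ⟨r, by rw [hr]; ring⟩
    have hmP : mm P = 2 := by rw [hmm]; exact if_neg hsq
    rw [hE]
    dsimp only
    rw [hmP, hDD]
    dsimp only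
    rw [hmP]
  have hXE : ((1 : PowerSeries ℂ) - PowerSeries.C (R := ℂ) (χ Polynomial.X) * PowerSeries.X)⁻¹
      = E Polynomial.X := by
    have hsq : IsSquare ((Polynomial.X : Polynomial Fq).eval 0) := by
      rw [Polynomial.eval_X]
      exact ⟨0, (mul_zero 0).symm⟩
    have hmP : mm Polynomial.X = 1 := by rw [hmm]; exact if_pos hsq
    rw [hE]
    dsimp only
    rw [hmP, hDD]
    dsimp only
    rw [hmP, pow_one, Polynomial.natDegree_X, one_mul, pow_one]
  -- disjoint union
  have hXnot12 : Polynomial.X ∉ S1 ∪ S2 := by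
    rw [Finset.mem_union]
    rintro (h | h)
    · exact ((hmemS1 _).mp h).2.2.2.1 (Polynomial.eval_X)
    · exact ((hmemS2 _).mp h).2.2.2.1 (Polynomial.eval_X)
  have hdisj12 : Disjoint S1 S2 := by
    rw [Finset.disjoint_left]
    intro P h1 h2'
    exact ((hmemS2 P).mp h2').2.2.2.2 ((hmemS1 P).mp h1).2.2.2.2
  have hdisjX : Disjoint (S1 ∪ S2) {Polynomial.X} := by
    rw [Finset.disjoint_singleton_right]
    exact hXnot12
  have hunion : (S1 ∪ S2) ∪ {Polynomial.X} = P' := by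
    apply Finset.ext
    intro P
    rw [Finset.mem_union, Finset.mem_union, Finset.mem_singleton, hmemP', hmemS1, hmemS2]
    constructor
    · rintro ((h | h) | h)
      · exact Or.inr ⟨h.1, h.2.1, h.2.2.1⟩
      · exact Or.inr ⟨h.1, h.2.1, h.2.2.1⟩
      · exact Or.inl h
    · rintro (h | ⟨hM, hI, hdeg⟩)
      · exact Or.inr h
      · by_cases h0 : P.eval 0 = 0
        · exact Or.inr (eq_X_of_irreducible_eval_zero hM hI h0)
        · by_cases hsq : ∃ a : Fq, a ^ 2 = P.eval 0
          · exact Or.inl (Or.inl ⟨hM, hI, hdeg, h0, hsq⟩)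
          · exact Or.inl (Or.inr ⟨hM, hI, hdeg, h0, hsq⟩)
  have hassemble :
      (∏ P ∈ S1, ((1 : PowerSeries ℂ) - PowerSeries.C (R := ℂ) (χ P)
          * PowerSeries.X ^ P.natDegree)⁻¹)
        * (∏ P ∈ S2, ((1 : PowerSeries ℂ) - PowerSeries.C (R := ℂ) (χ (P ^ 2))
          * PowerSeries.X ^ (2 * P.natDegree))⁻¹)
        * ((1 : PowerSeries ℂ) - PowerSeries.C (R := ℂ) (χ Polynomial.X) * PowerSeries.X)⁻¹
      = ∏ P ∈ P', E P := by
    rw [← hunion, Finset.prod_union hdisjX, Finset.prod_union hdisj12, Finset.prod_singleton,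
      Finset.prod_congr rfl hS1E, Finset.prod_congr rfl hS2E, hXE]
  have hmmsq : ∀ P : Polynomial Fq, IsSquare (P.eval 0) → mm P = 1 := fun P h => if_pos h
  have hmmns : ∀ P : Polynomial Fq, ¬ IsSquare (P.eval 0) → mm P = 2 := fun P h => if_neg h
  have hDDval : ∀ P : Polynomial Fq, DD P = mm P * P.natDegree := fun P => rfl
  -- rewrite the goal
  rw [hfin1, hfin2, hassemble, PowerSeries.coeff_prod]
  -- LHS conversion
  set Mn : Finset (Polynomial Fq) :=
    Master.filter (fun f => f.Monic ∧ f.natDegree = n) with hMn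
  set MnR : Finset (Polynomial Fq) :=
    Mn.filter (fun f => ∃ A B : Polynomial Fq, f = A ^ 2 + Polynomial.X * B ^ 2) with hMnR
  have hLHS : (∑ᶠ (f : Polynomial Fq) (_ : f.Monic ∧ f.natDegree = n), bInd f * χ f)
      = ∑ f ∈ MnR, χ f := by
    rw [finsum_cond_eq_sum_of_cond_iff (fun f => bInd f * χ f) (t := Mn) ?_]
    · rw [hMnR]
      conv_rhs => rw [Finset.sum_filter]
      apply Finset.sum_congr rfl
      intro f hf
      by_cases hrep : ∃ A B : Polynomial Fq, f = A ^ 2 + Polynomial.X * B ^ 2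
      · rw [if_pos hrep]
        simp only [bInd]
        rw [if_pos hrep, one_mul]
      · rw [if_neg hrep]
        simp only [bInd]
        rw [if_neg hrep, zero_mul]
    · intro f hf
      rw [hMn, Finset.mem_filter, hmemMaster]
      constructor
      · intro h; exact ⟨le_of_eq h.2, h⟩
      · intro h; exact h.2
  rw [hLHS]
  -- the diagonal sum with divisibility constraints
  set T : Finset (Polynomial Fq →₀ ℕ) :=
    (P'.finsuppAntidiag n).filter (fun l => ∀ P ∈ P', DD P ∣ l P) with hT
  have hcoeffE : ∀ P ∈ P', ∀ j : ℕ, PowerSeries.coeff (R := ℂ) j (E P)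
      = if DD P ∣ j then (χ (P ^ mm P)) ^ (j / DD P) else 0 := by
    intro P hP j
    rw [hE]
    dsimp only
    exact coeff_inv_geom _ (hDDpos P hP) j
  have hsum_eq : ∑ l ∈ P'.finsuppAntidiag n, ∏ P ∈ P', PowerSeries.coeff (R := ℂ) (l P) (E P)
      = ∑ l ∈ T, χ (∏ P ∈ P', P ^ (mm P * (l P / DD P))) := by
    have hstep1 : ∑ l ∈ P'.finsuppAntidiag n, ∏ P ∈ P', PowerSeries.coeff (R := ℂ) (l P) (E P)
        = ∑ l ∈ T, ∏ P ∈ P', PowerSeries.coeff (R := ℂ) (l P) (E P) := by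
      refine (Finset.sum_subset (hT ▸ Finset.filter_subset _ _) ?_).symm
      intro l hl hnl
      rw [hT, Finset.mem_filter] at hnl
      have hnd' : ¬ ∀ P ∈ P', DD P ∣ l P := fun hc => hnl ⟨hl, hc⟩
      push_neg at hnd'
      obtain ⟨P0, hP0, hnd⟩ := hnd'
      apply Finset.prod_eq_zero hP0
      rw [hcoeffE P0 hP0, if_neg hnd]
    rw [hstep1]
    apply Finset.sum_congr rfl
    intro l hl
    rw [hT, Finset.mem_filter] at hl
    rw [hχprod]
    apply Finset.prod_congr rfl
    intro P hP
    rw [hcoeffE P hP, if_pos (hl.2 P hP), ← hχpow, ← pow_mul]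
  rw [hsum_eq]
  -- the bijection between monic representable polynomials and exponent data
  set jmap : Polynomial Fq → (Polynomial Fq →₀ ℕ) := fun f =>
    ⟨(normalizedFactors f).toFinset,
     fun P => Multiset.count P (normalizedFactors f) * P.natDegree, by
      intro P
      rw [Multiset.mem_toFinset]
      constructor
      · intro hP
        have hc : Multiset.count P (normalizedFactors f) ≠ 0 :=
          fun h => (Multiset.count_eq_zero.mp h) hP
        have hd : P.natDegree ≠ 0 := by
          have := irreducible_natDegree_pos (irreducible_of_normalized_factor P hP)
          omega
        exact Nat.mul_ne_zero hc hd
      · intro hne0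
        by_contra hP
        exact hne0 (mul_eq_zero_of_left (Multiset.count_eq_zero.mpr hP) _)⟩ with hjmap
  have hjval : ∀ f P : Polynomial Fq,
      jmap f P = Multiset.count P (normalizedFactors f) * P.natDegree := fun f P => rfl
  have hMnRspec : ∀ f ∈ MnR, f.Monic ∧ f.natDegree = n ∧ IsRep f := by
    intro f hf
    rw [hMnR, Finset.mem_filter, hMn, Finset.mem_filter] at hf
    exact ⟨hf.1.2.1, hf.1.2.2, hf.2⟩
  have hfactorsP' : ∀ f ∈ MnR, (normalizedFactors f).toFinset ⊆ P' := by
    intro f hf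
    obtain ⟨hMo, hdeg, -⟩ := hMnRspec f hf
    intro P hP
    rw [Multiset.mem_toFinset] at hP
    rw [hmemP']
    right
    refine ⟨monic_of_normalized_factor hP, irreducible_of_normalized_factor P hP, ?_⟩
    calc P.natDegree ≤ f.natDegree :=
          Polynomial.natDegree_le_of_dvd (dvd_of_mem_normalizedFactors hP) hMo.ne_zero
      _ = n := hdeg
  have hexp : ∀ f ∈ MnR, ∀ P ∈ P',
      mm P * ((jmap f) P / DD P) = Multiset.count P (normalizedFactors f) := by
    intro f hf P hP
    obtain ⟨hMo, -, hrep⟩ := hMnRspec f hf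
    have hdegP : 0 < P.natDegree := hP'deg P hP
    rw [hjval]
    by_cases hsq : IsSquare (P.eval 0)
    · rw [hDDval, hmmsq P hsq, one_mul, one_mul, Nat.mul_div_cancel _ hdegP]
    · have heven : Even (Multiset.count P (normalizedFactors f)) :=
        count_even h2 (hP'monic P hP).1 (hP'monic P hP).2 hsq hMo.ne_zero hrep
      obtain ⟨k, hk⟩ := heven
      rw [hDDval, hmmns P hsq, hk]
      have hre : (k + k) * P.natDegree = (2 * P.natDegree) * k := by ring
      rw [hre, Nat.mul_div_cancel_left _ (by omega)]
      omega
  have hleft : ∀ f ∈ MnR, (∏ P ∈ P', P ^ (mm P * ((jmap f) P / DD P))) = f := by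
    intro f hf
    obtain ⟨hMo, -, -⟩ := hMnRspec f hf
    rw [Finset.prod_congr rfl (fun P hP => by rw [hexp f hf P hP])]
    rw [← Finset.prod_subset (hfactorsP' f hf) (fun P _ hnP => by
      rw [Multiset.count_eq_zero.mpr (fun hc => hnP (Multiset.mem_toFinset.mpr hc)), pow_zero])]
    rw [← Finset.prod_multiset_count]
    exact prod_normalizedFactors_monic hMo
  have hi : ∀ f ∈ MnR, jmap f ∈ T := by
    intro f hf
    obtain ⟨hMo, hdeg, hrep⟩ := hMnRspec f hf
    rw [hT, Finset.mem_filter, Finset.mem_finsuppAntidiag]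
    refine ⟨⟨?_, ?_⟩, ?_⟩
    · calc ∑ P ∈ P', (jmap f) P
          = ∑ P ∈ (normalizedFactors f).toFinset, (jmap f) P :=
            (Finset.sum_subset (hfactorsP' f hf) (fun P _ hnP => by
              rw [hjval,
                Multiset.count_eq_zero.mpr (fun hc => hnP (Multiset.mem_toFinset.mpr hc)),
                zero_mul])).symm
        _ = ∑ P ∈ (normalizedFactors f).toFinset,
              Multiset.count P (normalizedFactors f) * P.natDegree :=
            Finset.sum_congr rfl (fun P _ => hjval f P)
        _ = f.natDegree := (natDegree_eq_sum_count hMo).symm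
        _ = n := hdeg
    · exact hfactorsP' f hf
    · intro P hP
      rw [hjval, hDDval]
      by_cases hsq : IsSquare (P.eval 0)
      · rw [hmmsq P hsq, one_mul]
        exact dvd_mul_left _ _
      · have heven : Even (Multiset.count P (normalizedFactors f)) :=
          count_even h2 (hP'monic P hP).1 (hP'monic P hP).2 hsq hMo.ne_zero hrep
        obtain ⟨k, hk⟩ := heven
        rw [hmmns P hsq, hk]
        exact ⟨k, by ring⟩
  have hj : ∀ l ∈ T, (∏ P ∈ P', P ^ (mm P * (l P / DD P))) ∈ MnR := by
    intro l hl
    rw [hT, Finset.mem_filter, Finset.mem_finsuppAntidiag] at hl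
    obtain ⟨⟨hsum, hsupp⟩, hdvd⟩ := hl
    have hmonic : (∏ P ∈ P', P ^ (mm P * (l P / DD P))).Monic :=
      Polynomial.monic_prod_of_monic _ _ (fun P hP => ((hP'monic P hP).1).pow _)
    have hdeg : (∏ P ∈ P', P ^ (mm P * (l P / DD P))).natDegree = n := by
      rw [Polynomial.natDegree_prod _ _ (fun P hP => pow_ne_zero _ (hP'monic P hP).1.ne_zero)]
      calc ∑ P ∈ P', (P ^ (mm P * (l P / DD P))).natDegree
          = ∑ P ∈ P', l P := Finset.sum_congr rfl (fun P hP => by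
            rw [Polynomial.natDegree_pow]
            calc mm P * (l P / DD P) * P.natDegree = (l P / DD P) * DD P := by
                  rw [hDDval]; ring
              _ = l P := Nat.div_mul_cancel (hdvd P hP))
        _ = n := hsum
    have hrep : IsRep (∏ P ∈ P', P ^ (mm P * (l P / DD P))) := by
      apply Finset.prod_induction _ IsRep (fun a b ha hb => isRep_mul ha hb) isRep_one
      intro P hP
      by_cases hsq : IsSquare (P.eval 0)
      · exact isRep_pow (isRep_of_isSquare hq (hP'monic P hP).1 (hP'monic P hP).2 hsq) _
      · rw [hmmns P hsq, pow_mul]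
        exact isRep_pow (isRep_sq P) _
    rw [hMnR, Finset.mem_filter, hMn, Finset.mem_filter, hmemMaster]
    exact ⟨⟨le_of_eq hdeg, hmonic, hdeg⟩, hrep⟩
  have hright : ∀ l ∈ T, jmap (∏ P ∈ P', P ^ (mm P * (l P / DD P))) = l := by
    intro l hl
    rw [hT, Finset.mem_filter, Finset.mem_finsuppAntidiag] at hl
    obtain ⟨⟨hsum, hsupp⟩, hdvd⟩ := hl
    have hNF : normalizedFactors (∏ P ∈ P', P ^ (mm P * (l P / DD P)))
        = ∑ P ∈ P', (mm P * (l P / DD P)) • ({P} : Multiset (Polynomial Fq)) :=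
      normalizedFactors_finset_prod_pow (fun P hP => hP'monic P hP) _
    ext P
    rw [hjval, hNF, count_sum_nsmul_singleton]
    by_cases hP : P ∈ P'
    · rw [if_pos hP]
      calc mm P * (l P / DD P) * P.natDegree = (l P / DD P) * DD P := by rw [hDDval]; ring
        _ = l P := Nat.div_mul_cancel (hdvd P hP)
    · rw [if_neg hP, zero_mul]
      exact (Finsupp.notMem_support_iff.mp (fun hc => hP (hsupp hc))).symm
  exact Finset.sum_nbij' jmap (fun l => ∏ P ∈ P', P ^ (mm P * (l P / DD P)))
    hi hj hleft hright (fun f hf => by rw [hleft f hf])
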